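/- Let H be Hermitian, L an H-invariant subspace, and Z a matrix with range(Z) ⊆ L ⊆ ker(Z). Then for every θ, the matrix M(θ) = H − 2Re(e^{−2iθ}Z) is unitarily similar to M(0) = H − 2Re(Z); in particular the eigenvalues of M(θ) do not depend on θ. -/

import Mathlib

open Matrix

/-- The "real part" of a square complex matrix: `Re X = (X + X*)/2`. -/
noncomputable def rePart {ι : Type*} [Fintype ι] [DecidableEq ι] (X : Matrix ι ι ℂ) : Matrix ι ι ℂ :=
  (2 : ℂ)⁻¹ • (X + Xᴴ)

open Polynomial in
lemma charpoly_conj_aux {m : Type*} [Fintype m] [DecidableEq m] {R : Type*} [CommRing R]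
    (U V A : Matrix m m R) (hUV : U * V = 1) :
    (U * A * V).charpoly = A.charpoly := by
  have hmap : U.map (C : R →+* R[X]) * V.map C = 1 := by
    rw [← Matrix.map_mul, hUV]
    simp
  have h : charmatrix (U * A * V) = U.map C * charmatrix A * V.map C := by
    rw [charmatrix, charmatrix, Matrix.mul_sub, Matrix.sub_mul]
    congr 1
    · have hc : Matrix.scalar m (X : R[X]) * U.map C = U.map C * Matrix.scalar m (X : R[X]) :=
        (Matrix.scalar_commute (X : R[X]) (fun r => Commute.all _ _) (U.map C)).eq
      rw [Matrix.mul_assoc, ← Matrix.mul_assoc (U.map C), ← hc, Matrix.mul_assoc, hmap,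
        Matrix.mul_one]
    · simp only [RingHom.mapMatrix_apply, ← Matrix.map_mul]
  rw [Matrix.charpoly, Matrix.charpoly, h, Matrix.det_mul, Matrix.det_mul, mul_right_comm,
    ← Matrix.det_mul, hmap, Matrix.det_one, one_mul]

theorem Mtheta_unitarily_similar_of_nilpotent_structure
    {n : ℕ} (H Z : Matrix (Fin n) (Fin n) ℂ) (hH : Hᴴ = H)
    (L : Submodule ℂ (Fin n → ℂ))
    (hinv : ∀ x ∈ L, H.mulVec x ∈ L)
    (hrange : ∀ x : Fin n → ℂ, Z.mulVec x ∈ L)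
    (hker : ∀ x ∈ L, Z.mulVec x = 0)
    (M : ℝ → Matrix (Fin n) (Fin n) ℂ)
    (hM : ∀ θ : ℝ, M θ = H - (2 : ℂ) • rePart (Complex.exp (-(2 * θ : ℂ) * Complex.I) • Z)) :
    ∀ θ : ℝ,
      (∃ U : Matrix.unitaryGroup (Fin n) ℂ,
        M θ = (U : Matrix (Fin n) (Fin n) ℂ) * M 0 * star (U : Matrix (Fin n) (Fin n) ℂ)) ∧
      (M θ).charpoly = (M 0).charpoly := by
  classical
  -- the orthogonal projection onto L, as a matrix
  set K : Submodule ℂ (EuclideanSpace ℂ (Fin n)) :=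
    L.comap (WithLp.linearEquiv 2 ℂ (Fin n → ℂ)).toLinearMap with hK
  let p : (Fin n → ℂ) →ₗ[ℂ] (Fin n → ℂ) :=
    (WithLp.linearEquiv 2 ℂ (Fin n → ℂ)).toLinearMap ∘ₗ K.starProjection.toLinearMap ∘ₗ
      (WithLp.linearEquiv 2 ℂ (Fin n → ℂ)).symm.toLinearMap
  set P : Matrix (Fin n) (Fin n) ℂ := LinearMap.toMatrix' p with hPdef
  have hPvec : ∀ x, P.mulVec x = p x := fun x => by
    rw [← Matrix.toLin'_apply, hPdef, Matrix.toLin'_toMatrix']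
  have hmem : ∀ x, P.mulVec x ∈ L := fun x => by
    rw [hPvec]; exact K.starProjection_apply_mem _
  have hfix : ∀ x ∈ L, P.mulVec x = x := fun x hx => by
    rw [hPvec]
    have hx' : (WithLp.linearEquiv 2 ℂ (Fin n → ℂ)).symm x ∈ K := by
      simpa [hK] using hx
    show (WithLp.linearEquiv 2 ℂ (Fin n → ℂ))
      (K.starProjection ((WithLp.linearEquiv 2 ℂ (Fin n → ℂ)).symm x)) = x
    rw [Submodule.starProjection_eq_self_iff.mpr hx']
    simp
  have ext' : ∀ A B : Matrix (Fin n) (Fin n) ℂ, (∀ x, A.mulVec x = B.mulVec x) → A = B := by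
    intro A B h
    apply Matrix.toLin'.injective
    ext x
    simpa [Matrix.toLin'_apply] using congrFun (h (Pi.single x 1)) _
  -- key matrix identities
  have hZP : Z * P = 0 := ext' _ _ fun x => by
    rw [← Matrix.mulVec_mulVec, hker _ (hmem x), Matrix.zero_mulVec]
  have hPZ : P * Z = Z := ext' _ _ fun x => by
    rw [← Matrix.mulVec_mulVec, hfix _ (hrange x)]
  have hPHP : P * H * P = H * P := ext' _ _ fun x => by
    rw [← Matrix.mulVec_mulVec, ← Matrix.mulVec_mulVec, hfix _ (hinv _ (hmem x)),
      Matrix.mulVec_mulVec]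
  have hPherm : Pᴴ = P := by
    have : P.IsHermitian := by
      rw [Matrix.isHermitian_iff_isSymmetric]
      have hEq : P.toEuclideanLin = K.starProjection.toLinearMap := by
        apply LinearMap.ext
        intro x
        show WithLp.toLp 2 (P.mulVec (WithLp.ofLp x)) = _
        rw [hPvec]
        rfl
      rw [hEq]
      exact Submodule.starProjection_isSymmetric K
    exact this
  have hPH : P * H = H * P := by
    have h1 : (P * H * P)ᴴ = (H * P)ᴴ := by rw [hPHP]
    rw [Matrix.conjTranspose_mul, Matrix.conjTranspose_mul, Matrix.conjTranspose_mul,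
      hPherm, hH] at h1
    -- h1 : P * (H * P) = P * H
    rw [← Matrix.mul_assoc] at h1
    rw [← h1, hPHP]
  have hPZh : P * Zᴴ = 0 := by
    have := congrArg Matrix.conjTranspose hZP
    rwa [Matrix.conjTranspose_mul, hPherm, Matrix.conjTranspose_zero] at this
  have hZhP : Zᴴ * P = Zᴴ := by
    have := congrArg Matrix.conjTranspose hPZ
    rwa [Matrix.conjTranspose_mul, hPherm] at this
  intro θ
  -- the scalars
  set e : ℂ := Complex.exp (-(2 * (θ : ℂ)) * Complex.I) with he
  set c : ℂ := Complex.exp ((2 * (θ : ℂ)) * Complex.I) with hc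
  have hce : c * e = 1 := by
    rw [hc, he, ← Complex.exp_add]
    ring_nf
    exact Complex.exp_zero
  have hec : e * c = 1 := by rw [mul_comm]; exact hce
  have harg : (starRingEnd ℂ) (2 * (θ : ℂ) * Complex.I) = -(2 * (θ : ℂ)) * Complex.I := by
    simp only [_root_.map_mul, Complex.conj_I, Complex.conj_ofReal, map_ofNat]
    ring
  have hstarc : star c = e := by
    rw [Complex.star_def, hc, ← Complex.exp_conj, harg, ← he]
  have hstare : star e = c := by
    rw [← hstarc, star_star]
  -- the unitary matrix
  set U : Matrix (Fin n) (Fin n) ℂ := c • 1 + (1 - c) • P with hU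
  have hUstar : Uᴴ = e • 1 + (1 - e) • P := by
    rw [hU, Matrix.conjTranspose_add, Matrix.conjTranspose_smul, Matrix.conjTranspose_smul,
      Matrix.conjTranspose_one, hPherm, star_sub, star_one, hstarc]
  have hPP : P * P = P := ext' _ _ fun x => by
    rw [← Matrix.mulVec_mulVec, hfix _ (hmem x)]
  have key : ∀ a b : ℂ, a * b = 1 →
      (a • (1 : Matrix (Fin n) (Fin n) ℂ) + (1 - a) • P) * (b • 1 + (1 - b) • P) = 1 := by
    intro a b hab
    simp only [Matrix.add_mul, Matrix.mul_add, Matrix.smul_mul, Matrix.mul_smul,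
      Matrix.one_mul, Matrix.mul_one, hPP]
    match_scalars
    · linear_combination hab
    · linear_combination -hab
  have hUUstar : U * Uᴴ = 1 := by
    rw [hUstar, hU]; exact key c e hce
  have hUstarU : Uᴴ * U = 1 := by
    rw [hUstar, hU]; exact key e c hec
  have hUmem : U ∈ Matrix.unitaryGroup (Fin n) ℂ := by
    rw [Matrix.mem_unitaryGroup_iff]
    exact hUUstar
  -- compute M θ and M 0
  have hMθ : M θ = H - (e • Z + c • Zᴴ) := by
    rw [hM θ, rePart, Matrix.conjTranspose_smul]
    rw [show Complex.exp (-(2 * (θ : ℂ)) * Complex.I) = e from he.symm, hstare, smul_smul]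
    norm_num
  have hM0 : M 0 = H - (Z + Zᴴ) := by
    rw [hM 0, rePart]
    norm_num [Complex.exp_zero, smul_smul]
  -- the conjugation identity
  have hkey : U * M 0 * Uᴴ = M θ := by
    rw [hM0, hMθ]
    clear_value U e c
    have hUH : U * H = H * U := by
      rw [hU, Matrix.add_mul, Matrix.mul_add, Matrix.smul_mul, Matrix.mul_smul,
        Matrix.smul_mul, Matrix.mul_smul, Matrix.one_mul, Matrix.mul_one, hPH]
    have hUZ : U * Z = Z := by
      rw [hU, Matrix.add_mul, Matrix.smul_mul, Matrix.smul_mul, Matrix.one_mul, hPZ,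
        ← add_smul]
      norm_num
    have hZUstar : Z * Uᴴ = e • Z := by
      rw [hUstar, Matrix.mul_add, Matrix.mul_smul, Matrix.mul_smul, Matrix.mul_one, hZP]
      simp
    have hUZh : U * Zᴴ = c • Zᴴ := by
      rw [hU, Matrix.add_mul, Matrix.smul_mul, Matrix.smul_mul, Matrix.one_mul, hPZh]
      simp
    have hZhUstar' : Zᴴ * Uᴴ = Zᴴ := by
      rw [hUstar, Matrix.mul_add, Matrix.mul_smul, Matrix.mul_smul, Matrix.mul_one, hZhP,
        ← add_smul]
      norm_num
    rw [Matrix.mul_sub, Matrix.mul_add, hUZ, hUZh, hUH, Matrix.sub_mul, Matrix.add_mul,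
      Matrix.smul_mul, hZUstar, hZhUstar', Matrix.mul_assoc, hUUstar, Matrix.mul_one]
  refine ⟨⟨⟨U, hUmem⟩, ?_⟩, ?_⟩
  · exact hkey.symm
  · rw [← hkey]
    exact charpoly_conj_aux U Uᴴ (M 0) hUUstar
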